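/- Let V and W be finite-dimensional real inner product spaces, let P be an endomorphism of V such that no complex eigenvalue λ of the complexification P^ℂ of P has −λ also an eigenvalue, let c ≥ 0, ψ : V → ℝ linear, ν : V → W linear, and let X be the unique solution of Xᵗ∘P + Pᵗ∘Xᵗ = −T∘ρ, where T = −Pᵗ − (Pᵗ)⁻¹ and ρ = Pᵗ∘(νᵗν + c·ψᵗψ)∘P. Define Y = ker ν if c = 0 and Y = ker ψ ∩ ker ν if c > 0. Then X is invertible if and only if ker(P^ℂ − αI) ∩ (Y⊗ℂ) = {0} for every eigenvalue α ∈ ℂ of P^ℂ. -/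

import Mathlib

open scoped TensorProduct

variable {V W : Type*}

open Polynomial Module Matrix
open scoped RealInnerProductSpace

section AuxStmt9

section Spectral

variable {K : Type*} [Field K] {M : Type*} [AddCommGroup M] [Module K M]
  [FiniteDimensional K M]

lemma Matrix.charpoly_transpose' {n : Type*} [Fintype n] [DecidableEq n] {R : Type*} [CommRing R]
    (A : Matrix n n R) : Matrix.charpoly A.transpose = A.charpoly := by
  rw [Matrix.charpoly, Matrix.charpoly, ← Matrix.det_transpose (charmatrix A)]
  congr 1
  ext i j
  by_cases h : i = j
  · subst h; simp [charmatrix_apply_eq, Matrix.transpose_apply]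
  · simp [charmatrix_apply_ne _ _ _ h, charmatrix_apply_ne _ _ _ (Ne.symm h),
      Matrix.transpose_apply]

lemma eval_charpoly_eq_det (f : Module.End K M) (μ : K) :
    f.charpoly.eval μ = LinearMap.det (μ • (1 : Module.End K M) - f) := by
  let b := Module.Free.chooseBasis K M
  rw [← LinearMap.charpoly_toMatrix f b, ← LinearMap.det_toMatrix b]
  have h1 : LinearMap.toMatrix b b (μ • (1 : Module.End K M) - f)
      = (charmatrix (LinearMap.toMatrix b b f)).map (Polynomial.eval μ) := by
    ext i j
    by_cases h : i = j
    · subst h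
      simp [charmatrix_apply_eq, LinearMap.toMatrix_one (M₁ := M), Matrix.one_apply]
    · simp [charmatrix_apply_ne _ _ _ h, Matrix.one_apply_ne h]
  rw [h1, Matrix.charpoly, ← Polynomial.coe_evalRingHom, RingHom.map_det]
  rfl

lemma hasEigenvalue_iff_isRoot_charpoly (f : Module.End K M) (μ : K) :
    f.HasEigenvalue μ ↔ f.charpoly.IsRoot μ := by
  constructor
  · intro h
    have h1 := (Module.End.hasEigenvalue_iff_isRoot (R := K)).mp h
    exact h1.dvd (LinearMap.minpoly_dvd_charpoly f)
  · intro h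
    have hdet : LinearMap.det (μ • (1 : Module.End K M) - f) = 0 := by
      rw [← eval_charpoly_eq_det]; exact h
    obtain ⟨x, hx, hx0⟩ : ∃ x, x ∈ LinearMap.ker (μ • (1 : Module.End K M) - f) ∧ x ≠ 0 := by
      have := LinearMap.bot_lt_ker_of_det_eq_zero hdet
      obtain ⟨x, hx, hx0⟩ := SetLike.exists_of_lt this
      exact ⟨x, hx, by simpa using hx0⟩
    apply Module.End.hasEigenvalue_of_hasEigenvector (x := x)
    refine ⟨Module.End.mem_eigenspace_iff.mpr ?_, hx0⟩
    have h2 := LinearMap.mem_ker.mp hx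
    have h3 : μ • x - f x = 0 := by simpa using h2
    rw [sub_eq_zero] at h3
    exact h3.symm

end Spectral

section Adj
variable [NormedAddCommGroup V] [InnerProductSpace ℝ V] [FiniteDimensional ℝ V]

lemma charpoly_adjoint (P : Module.End ℝ V) :
    (LinearMap.adjoint P).charpoly = P.charpoly := by
  let b := (stdOrthonormalBasis ℝ V)
  rw [← LinearMap.charpoly_toMatrix (LinearMap.adjoint P) b.toBasis,
    ← LinearMap.charpoly_toMatrix P b.toBasis,
    LinearMap.toMatrix_adjoint]
  have : (LinearMap.toMatrix b.toBasis b.toBasis P)ᴴ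
      = (LinearMap.toMatrix b.toBasis b.toBasis P)ᵀ := by
    ext i j; simp [Matrix.conjTranspose_apply]
  rw [this]
  exact Matrix.charpoly_transpose' _
end Adj

section BC
variable [AddCommGroup V] [Module ℝ V] [AddCommGroup W] [Module ℝ W]

lemma baseChange_inj {f : V →ₗ[ℝ] W} (hf : Function.Injective f) :
    Function.Injective (f.baseChange ℂ) := by
  have h := Module.Flat.lTensor_preserves_injective_linearMap (M := ℂ) f hf
  rwa [← LinearMap.baseChange_eq_ltensor] at h

lemma one_tmul_eq_zero_iff [Module.Free ℝ V] (v : V) : (1 : ℂ) ⊗ₜ[ℝ] v = 0 ↔ v = 0 := by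
  constructor
  · intro h
    let b := Module.Free.chooseBasis ℝ V
    have : ∀ i, b.repr v i = 0 := by
      intro i
      have h2 := congrArg (fun z => (b.baseChange ℂ).repr z i) h
      simp only [map_zero, Finsupp.coe_zero, Pi.zero_apply] at h2
      rw [Basis.baseChange_repr_tmul] at h2
      have h3 : (b.repr v i : ℂ) = 0 := by
        simpa [Complex.real_smul] using h2
      exact_mod_cast h3
    have : b.repr v = 0 := Finsupp.ext this
    simpa using congrArg b.repr.symm this
  · rintro rfl; simp

end BC

lemma not_injective_iff_exists {K M : Type*} [Field K] [AddCommGroup M] [Module K M]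
    (g : M →ₗ[K] M) : ¬ Function.Injective g ↔ ∃ x, x ≠ 0 ∧ g x = 0 := by
  rw [← LinearMap.ker_eq_bot]
  constructor
  · intro h
    obtain ⟨x, hx, hx0⟩ := Submodule.exists_mem_ne_zero_of_ne_bot h
    exact ⟨x, hx0, hx⟩
  · rintro ⟨x, hx0, hx⟩ h
    exact hx0 (h ▸ LinearMap.mem_ker.mpr hx : x ∈ (⊥ : Submodule K M))

lemma aeval_injective_of_roots {M : Type*} [AddCommGroup M] [Module ℂ M]
    (B : Module.End ℂ M) (p : ℂ[X]) (hm : p.Monic)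
    (hroots : ∀ r : ℂ, p.IsRoot r → Function.Injective ⇑(B - r • (1 : Module.End ℂ M))) :
    Function.Injective (Polynomial.aeval B p) := by
  suffices H : ∀ (n : ℕ) (p : ℂ[X]), p.natDegree = n → p.Monic →
      (∀ r : ℂ, p.IsRoot r → Function.Injective ⇑(B - r • (1 : Module.End ℂ M))) →
      Function.Injective (Polynomial.aeval B p) from H p.natDegree p rfl hm hroots
  intro n
  induction n with
  | zero =>
    intro p hdeg hm _
    rw [hm.natDegree_eq_zero.mp hdeg]
    rw [map_one]; exact fun a b hab => hab
  | succ n ih =>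
    intro p hdeg hm hroots
    obtain ⟨r, hr⟩ : ∃ r : ℂ, p.IsRoot r := by
      apply Complex.exists_root
      rw [degree_eq_natDegree hm.ne_zero, hdeg]
      exact_mod_cast Nat.succ_pos n
    obtain ⟨g, hg⟩ := (dvd_iff_isRoot.mpr hr)
    have hgm : g.Monic := (monic_X_sub_C r).of_mul_monic_left (hg ▸ hm)
    have hgdeg : g.natDegree = n := by
      have := hdeg
      rw [hg, natDegree_mul (X_sub_C_ne_zero r) hgm.ne_zero, natDegree_X_sub_C] at this
      omega
    have hgroots : ∀ s : ℂ, g.IsRoot s → Function.Injective ⇑(B - s • (1 : Module.End ℂ M)) := by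
      intro s hs
      exact hroots s (hs.dvd (Dvd.intro_left _ hg.symm))
    have h1 : Polynomial.aeval B p = (B - r • 1) * Polynomial.aeval B g := by
      rw [hg, _root_.map_mul, _root_.map_sub, aeval_X, aeval_C]
      congr 2
    rw [h1]
    intro x y hxy
    exact ih g hgdeg hgm hgroots (hroots r hr hxy)

lemma Zmul_aeval {V : Type*} [AddCommGroup V] [Module ℝ V]
    (P B Z : Module.End ℝ V) (hcomm : Z * P = B * Z) (p : ℝ[X]) :
    Z * Polynomial.aeval P p = Polynomial.aeval B p * Z := by
  have hpow : ∀ n : ℕ, Z * P ^ n = B ^ n * Z := by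
    intro n
    induction n with
    | zero => simp
    | succ n ih =>
      calc Z * P ^ (n + 1) = Z * P ^ n * P := by rw [pow_succ, mul_assoc]
      _ = B ^ n * Z * P := by rw [ih]
      _ = B ^ n * (B * Z) := by rw [mul_assoc, hcomm]
      _ = B ^ (n + 1) * Z := by rw [pow_succ, mul_assoc]
  induction p using Polynomial.induction_on' with
  | add p q hp hq => simp only [map_add, mul_add, add_mul, hp, hq]
  | monomial n a =>
    rw [aeval_monomial, aeval_monomial, ← mul_assoc, ← Algebra.commutes a Z, mul_assoc,
      hpow n, ← mul_assoc]

section Sylv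
variable {V : Type*} [NormedAddCommGroup V] [InnerProductSpace ℝ V] [FiniteDimensional ℝ V]

lemma hasEig_adjoint_iff (P : Module.End ℝ V) (β : ℂ) :
    Module.End.HasEigenvalue (LinearMap.baseChange ℂ (LinearMap.adjoint P)) β ↔
      Module.End.HasEigenvalue (LinearMap.baseChange ℂ P) β := by
  rw [hasEigenvalue_iff_isRoot_charpoly, hasEigenvalue_iff_isRoot_charpoly,
    LinearMap.charpoly_baseChange, LinearMap.charpoly_baseChange, charpoly_adjoint]

lemma injective_of_baseChange {f : V →ₗ[ℝ] V} (h : Function.Injective (f.baseChange ℂ)) :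
    Function.Injective f := by
  intro a b hab
  have h1 : f.baseChange ℂ ((1 : ℂ) ⊗ₜ[ℝ] a) = f.baseChange ℂ ((1 : ℂ) ⊗ₜ[ℝ] b) := by
    simp [LinearMap.baseChange_tmul, hab]
  have h2 := h h1
  have h3 : (1 : ℂ) ⊗ₜ[ℝ] (a - b) = 0 := by
    rw [TensorProduct.tmul_sub, h2, sub_self]
  exact sub_eq_zero.mp ((one_tmul_eq_zero_iff _).mp h3)

lemma sylvester_injective (P : Module.End ℝ V)
    (hσ : ∀ μ : ℂ, Module.End.HasEigenvalue (LinearMap.baseChange ℂ P) μ →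
      ¬ Module.End.HasEigenvalue (LinearMap.baseChange ℂ P) (-μ))
    (Z : Module.End ℝ V) (hZ : Z * P + LinearMap.adjoint P * Z = 0) : Z = 0 := by
  set B : Module.End ℝ V := -LinearMap.adjoint P with hB
  have hcomm : Z * P = B * Z := by
    rw [hB, neg_mul]
    have := eq_neg_of_add_eq_zero_left hZ
    rw [this]
  have hpoly := Zmul_aeval P B Z hcomm (LinearMap.charpoly P)
  rw [LinearMap.aeval_self_charpoly, mul_zero] at hpoly
  have hinj : Function.Injective (Polynomial.aeval B (LinearMap.charpoly P)) := by
    apply injective_of_baseChange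
    have hbc : (Polynomial.aeval B (LinearMap.charpoly P)).baseChange ℂ
        = Polynomial.aeval (B.baseChange ℂ) ((LinearMap.charpoly P).map (algebraMap ℝ ℂ)) := by
      rw [Polynomial.aeval_map_algebraMap]
      exact (Polynomial.aeval_algHom_apply (Module.End.baseChangeHom ℝ ℂ V) B _).symm
    rw [hbc]
    apply aeval_injective_of_roots
    · exact (LinearMap.charpoly_monic P).map _
    · intro r hr
      have hq : (LinearMap.charpoly P).map (algebraMap ℝ ℂ)
          = (P.baseChange ℂ).charpoly := (LinearMap.charpoly_baseChange P ℂ).symm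
      have hrP : Module.End.HasEigenvalue (P.baseChange ℂ) r :=
        (hasEigenvalue_iff_isRoot_charpoly _ _).mpr (hq ▸ hr)
      by_contra hni
      obtain ⟨x, hx0, hx⟩ := (not_injective_iff_exists _).mp hni
      have hBx : (B.baseChange ℂ) x = r • x := by
        have h4 : (B.baseChange ℂ) x - r • x = 0 := by
          simpa [LinearMap.sub_apply] using hx
        exact sub_eq_zero.mp h4
      have hAx : ((LinearMap.adjoint P).baseChange ℂ) x = (-r) • x := by
        rw [hB, LinearMap.baseChange_neg] at hBx
        have h' : -(((LinearMap.adjoint P).baseChange ℂ) x) = r • x := by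
          simpa [LinearMap.neg_apply] using hBx
        rw [neg_eq_iff_eq_neg.mp h', neg_smul]
      have h5 : Module.End.HasEigenvalue ((LinearMap.adjoint P).baseChange ℂ) (-r) :=
        Module.End.hasEigenvalue_of_hasEigenvector
          ⟨Module.End.mem_eigenspace_iff.mpr hAx, hx0⟩
      exact hσ r hrP ((hasEig_adjoint_iff P (-r)).mp h5)
  ext v
  have h6 : Polynomial.aeval B (LinearMap.charpoly P) (Z v) = 0 := by
    have := congrArg (fun f : Module.End ℝ V => f v) hpoly.symm
    simpa [Module.End.mul_apply] using this
  have h7 := hinj (h6.trans (map_zero (Polynomial.aeval B (LinearMap.charpoly P))).symm)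
  simpa using h7

end Sylv

end AuxStmt9

/-- `νᵗν`, the symmetric endomorphism associated to a linear map `ν`. -/
noncomputable def gram [NormedAddCommGroup V] [InnerProductSpace ℝ V] [FiniteDimensional ℝ V]
    [NormedAddCommGroup W] [InnerProductSpace ℝ W] [FiniteDimensional ℝ W]
    (ν : V →ₗ[ℝ] W) : Module.End ℝ V :=
  LinearMap.adjoint ν ∘ₗ ν

set_option maxHeartbeats 1000000 in
/-- with `T = −Pᵗ − (Pᵗ)⁻¹`, `ρ = Pᵗ∘(νᵗν + c·ψᵗψ)∘P`, `c ≥ 0`, and `X` the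
(unique) solution of `Xᵗ∘P + Pᵗ∘Xᵗ = −T∘ρ`, setting `Y = ker ν` if `c = 0` and
`Y = ker ψ ∩ ker ν` if `c > 0`, `X` is invertible iff
`ker(P^ℂ − αI) ∩ (Y ⊗ ℂ) = 0` for every eigenvalue `α` of `P^ℂ`. -/
theorem stmt_9 [NormedAddCommGroup V] [InnerProductSpace ℝ V] [FiniteDimensional ℝ V]
    [NormedAddCommGroup W] [InnerProductSpace ℝ W] [FiniteDimensional ℝ W]
    (P : Module.End ℝ V)
    (hσ : ∀ μ : ℂ, Module.End.HasEigenvalue (LinearMap.baseChange ℂ (P : V →ₗ[ℝ] V)) μ →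
      ¬ Module.End.HasEigenvalue (LinearMap.baseChange ℂ (P : V →ₗ[ℝ] V)) (-μ))
    (c : ℝ) (hc : 0 ≤ c) (ψ : V →ₗ[ℝ] ℝ) (ν : V →ₗ[ℝ] W)
    (T ρ : Module.End ℝ V)
    (hT : T = -LinearMap.adjoint P - Ring.inverse (LinearMap.adjoint P))
    (hρ : ρ = LinearMap.adjoint P * (gram ν + c • gram ψ) * P)
    (X : Module.End ℝ V)
    (hX : LinearMap.adjoint X * P + LinearMap.adjoint P * LinearMap.adjoint X = -(T * ρ))
    (Y : Submodule ℝ V)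
    (hY : Y = if c = 0 then LinearMap.ker ν else LinearMap.ker ψ ⊓ LinearMap.ker ν) :
    Function.Bijective X ↔
      ∀ μ : ℂ, Module.End.HasEigenvalue (LinearMap.baseChange ℂ (P : V →ₗ[ℝ] V)) μ →
        Module.End.eigenspace (LinearMap.baseChange ℂ (P : V →ₗ[ℝ] V)) μ ⊓
          Submodule.baseChange ℂ Y = ⊥ := by
  set A : Module.End ℝ V := LinearMap.adjoint P with hA
  set G : Module.End ℝ V := gram ν + c • gram ψ with hG
  set Q : Module.End ℝ V := LinearMap.adjoint X with hQdef
  -- Step 0 : P is bijective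
  have hPinj : Function.Injective P := by
    by_contra hni
    obtain ⟨x, hx0, hx⟩ := (not_injective_iff_exists (P : V →ₗ[ℝ] V)).mp hni
    have h1 : (LinearMap.baseChange ℂ (P : V →ₗ[ℝ] V)) ((1 : ℂ) ⊗ₜ[ℝ] x)
        = (0 : ℂ) • ((1 : ℂ) ⊗ₜ[ℝ] x) := by
      simp [LinearMap.baseChange_tmul, hx]
    have h2 : Module.End.HasEigenvalue (LinearMap.baseChange ℂ (P : V →ₗ[ℝ] V)) 0 :=
      Module.End.hasEigenvalue_of_hasEigenvector
        ⟨Module.End.mem_eigenspace_iff.mpr h1, fun h => hx0 ((one_tmul_eq_zero_iff x).mp h)⟩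
    exact hσ 0 h2 (by simpa using h2)
  have hPbij : Function.Bijective P := ⟨hPinj, (LinearMap.injective_iff_surjective).mp hPinj⟩
  have hPunit : IsUnit (P : Module.End ℝ V) := (Module.End.isUnit_iff P).mpr hPbij
  have hAunit : IsUnit A := by
    rw [hA, ← LinearMap.star_eq_adjoint]
    exact hPunit.star
  have hinv : Ring.inverse A * A = 1 := Ring.inverse_mul_cancel _ hAunit
  -- Step 1 : the equation for Q
  have hQ : Q * P + A * Q = A * A * G * P + G * P := by
    rw [hX, hT, hρ]
    calc -((-A - Ring.inverse A) * (A * G * P))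
        = A * (A * G * P) + Ring.inverse A * (A * G * P) := by
          rw [sub_mul, neg_mul, neg_sub, sub_neg_eq_add, add_comm]
    _ = A * A * G * P + G * P := by
          rw [show Ring.inverse A * (A * G * P) = Ring.inverse A * A * (G * P) by
            noncomm_ring, hinv, one_mul]
          noncomm_ring
  -- Step 2 : symmetric part of Q
  have hgν : star (gram ν) = gram ν := by
    rw [LinearMap.star_eq_adjoint, _root_.gram, LinearMap.adjoint_comp, LinearMap.adjoint_adjoint]
  have hgψ : star (gram ψ) = gram ψ := by
    rw [LinearMap.star_eq_adjoint, _root_.gram, LinearMap.adjoint_comp, LinearMap.adjoint_adjoint]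
  have hGstar : star G = G := by
    rw [hG, star_add, star_smul, hgν, hgψ, star_trivial]
  have hS : Q + star Q = G + A * G * P := by
    have hstar := congrArg star hQ
    simp only [star_add, StarMul.star_mul] at hstar
    rw [hGstar] at hstar
    have hsP : star (P : Module.End ℝ V) = A := by rw [LinearMap.star_eq_adjoint, hA]
    have hsA : star A = (P : Module.End ℝ V) := by
      rw [hA, LinearMap.star_eq_adjoint, LinearMap.adjoint_adjoint]
    rw [hsP, hsA] at hstar
    have hstar' : star Q * P + A * star Q = A * (G * (P * P)) + A * G := by
      rw [add_comm]; exact hstar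
    have hZ : ((Q + star Q) - (G + A * G * P)) * P + A * ((Q + star Q) - (G + A * G * P)) = 0 := by
      have e1 : ((Q + star Q) - (G + A * G * P)) * P + A * ((Q + star Q) - (G + A * G * P))
          = (Q * P + A * Q) + (star Q * P + A * star Q)
            - ((G * P + A * (G * (P * P))) + (A * G + A * A * G * P)) := by
        noncomm_ring
      rw [e1, hQ, hstar']
      noncomm_ring
    have := sylvester_injective P hσ _ hZ
    exact sub_eq_zero.mp this
  -- Step 3 : inner product facts
  have hGapply : ∀ w : V, G w = LinearMap.adjoint ν (ν w) + c • LinearMap.adjoint ψ (ψ w) := by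
    intro w
    simp [hG, _root_.gram, LinearMap.add_apply, LinearMap.smul_apply]
  have hGinner : ∀ w : V, ⟪G w, w⟫ = ‖ν w‖ ^ 2 + c * ‖ψ w‖ ^ 2 := by
    intro w
    rw [hGapply, inner_add_left, real_inner_smul_left, LinearMap.adjoint_inner_left,
      LinearMap.adjoint_inner_left, real_inner_self_eq_norm_sq, real_inner_self_eq_norm_sq]
  have hGnonneg : ∀ w : V, 0 ≤ ⟪G w, w⟫ := by
    intro w; rw [hGinner]; positivity
  have hGzero' : ∀ w : V, ⟪G w, w⟫ = 0 → (G w = 0 ∧ ν w = 0 ∧ (c ≠ 0 → ψ w = 0)) := by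
    intro w hw
    rw [hGinner] at hw
    have hn1 : ‖ν w‖ ^ 2 = 0 ∧ c * ‖ψ w‖ ^ 2 = 0 := by
      constructor <;> linarith [sq_nonneg ‖ν w‖, mul_nonneg hc (sq_nonneg ‖ψ w‖)]
    have hν : ν w = 0 := norm_eq_zero.mp (pow_eq_zero_iff two_ne_zero |>.mp hn1.1)
    have hcψ : c ≠ 0 → ψ w = 0 := by
      intro hc0
      rcases mul_eq_zero.mp hn1.2 with h | h
      · exact absurd h hc0
      · exact norm_eq_zero.mp (pow_eq_zero_iff two_ne_zero |>.mp h)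
    refine ⟨?_, hν, hcψ⟩
    rw [hGapply, hν, map_zero, zero_add]
    by_cases hc0 : c = 0
    · simp [hc0]
    · simp [hcψ hc0]
  -- Step 4 : kernel facts
  have hker : ∀ v : V, Q v = 0 → ⟪G v, v⟫ = 0 ∧ ⟪G (P v), P v⟫ = 0 ∧ star Q v = 0 := by
    intro v hv
    have h4 : (Q + star Q) v = G v + A (G (P v)) := by
      rw [hS]; simp [LinearMap.add_apply, Module.End.mul_apply]
    have h1 : ⟪(Q + star Q) v, v⟫ = ⟪G v, v⟫ + ⟪G (P v), P v⟫ := by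
      rw [h4, inner_add_left, hA, LinearMap.adjoint_inner_left]
    have h2 : ⟪(Q + star Q) v, v⟫ = 0 := by
      have h5 : (Q + star Q) v = star Q v := by simp [LinearMap.add_apply, hv]
      rw [h5, LinearMap.star_eq_adjoint, LinearMap.adjoint_inner_left, hv, inner_zero_right]
    have h3 : ⟪G v, v⟫ = 0 ∧ ⟪G (P v), P v⟫ = 0 := by
      have h6 := h1.symm.trans h2
      constructor <;> linarith [hGnonneg v, hGnonneg (P v)]
    refine ⟨h3.1, h3.2, ?_⟩
    have hGv := (hGzero' v h3.1).1
    have hGPv := (hGzero' (P v) h3.2).1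
    have : star Q v = (Q + star Q) v - Q v := by simp [LinearMap.add_apply]
    rw [this, h4, hGv, hGPv, map_zero, hv]; simp
  have hKP : ∀ v : V, Q v = 0 → Q (P v) = 0 := by
    intro v hv
    have happ := congrArg (fun f : Module.End ℝ V => f v) hQ
    simp only [LinearMap.add_apply, Module.End.mul_apply] at happ
    have hGPv := (hGzero' (P v) (hker v hv).2.1).1
    rw [hv, map_zero, add_zero, hGPv, map_zero, map_zero, zero_add] at happ
    rw [happ]
  have hKY : ∀ v : V, Q v = 0 → v ∈ Y := by
    intro v hv
    obtain ⟨-, hν, hcψ⟩ := hGzero' v (hker v hv).1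
    rw [hY]
    split_ifs with h
    · exact LinearMap.mem_ker.mpr hν
    · exact Submodule.mem_inf.mpr ⟨LinearMap.mem_ker.mpr (hcψ h), LinearMap.mem_ker.mpr hν⟩
  have hYG : ∀ y ∈ Y, G y = 0 := by
    intro y hy
    rw [hY] at hy
    split_ifs at hy with h
    · rw [hGapply, LinearMap.mem_ker.mp hy, map_zero, zero_add, h]; simp
    · obtain ⟨h1, h2⟩ := Submodule.mem_inf.mp hy
      rw [hGapply, LinearMap.mem_ker.mp h2, LinearMap.mem_ker.mp h1]; simp
  -- bijectivity transfer
  have hXQbij : Function.Bijective ⇑X ↔ Function.Bijective ⇑Q := by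
    rw [← Module.End.isUnit_iff, ← Module.End.isUnit_iff, hQdef, ← LinearMap.star_eq_adjoint]
    exact isUnit_star.symm
  have hbch : ∀ f : Module.End ℝ V, Module.End.baseChangeHom ℝ ℂ V f = LinearMap.baseChange ℂ f :=
    fun f => rfl
  constructor
  · intro hbij μ hμ
    rw [eq_bot_iff]
    intro v hv
    obtain ⟨hv1, hv2⟩ := Submodule.mem_inf.mp hv
    have hQunit : IsUnit Q := (Module.End.isUnit_iff Q).mpr (hXQbij.mp hbij)
    have hQ'unit : IsUnit (LinearMap.baseChange ℂ Q) := by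
      have h7 := hQunit.map (Module.End.baseChangeHom ℝ ℂ V)
      rwa [hbch] at h7
    have hQ'inj := ((Module.End.isUnit_iff _).mp hQ'unit).injective
    have hQ' := congrArg (LinearMap.baseChange ℂ) hQ
    simp only [LinearMap.baseChange_add, LinearMap.baseChange_mul] at hQ'
    have hPv : LinearMap.baseChange ℂ P v = μ • v := Module.End.mem_eigenspace_iff.mp hv1
    have hGv : LinearMap.baseChange ℂ G v = 0 := by
      have hle : Submodule.baseChange ℂ Y ≤ LinearMap.ker (LinearMap.baseChange ℂ G) := by
        rw [Submodule.baseChange]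
        rintro z ⟨t, rfl⟩
        induction t using TensorProduct.induction_on with
        | zero => simp
        | tmul a y => simp [LinearMap.mem_ker, LinearMap.baseChange_tmul, hYG y y.2]
        | add s t hs ht => rw [map_add]; exact Submodule.add_mem _ hs ht
      exact LinearMap.mem_ker.mp (hle hv2)
    have happ := congrArg (fun f : Module.End ℂ (ℂ ⊗[ℝ] V) => f v) hQ'
    simp only [Module.End.mul_apply, LinearMap.add_apply] at happ
    rw [hPv] at happ
    simp only [_root_.map_smul, hGv, smul_zero, map_zero, add_zero] at happ
    by_cases hqv : LinearMap.baseChange ℂ Q v = 0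
    · have h8 : LinearMap.baseChange ℂ Q v = LinearMap.baseChange ℂ Q 0 := by
        rw [hqv, map_zero]
      simpa using hQ'inj h8
    · exfalso
      have hAv : LinearMap.baseChange ℂ A (LinearMap.baseChange ℂ Q v)
          = (-μ) • (LinearMap.baseChange ℂ Q v) := by
        have h9 := eq_neg_of_add_eq_zero_right happ
        rw [h9, neg_smul]
      have hEig : Module.End.HasEigenvalue (LinearMap.baseChange ℂ A) (-μ) :=
        Module.End.hasEigenvalue_of_hasEigenvector
          ⟨Module.End.mem_eigenspace_iff.mpr hAv, hqv⟩
      rw [hA] at hEig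
      exact hσ μ hμ ((hasEig_adjoint_iff P (-μ)).mp hEig)
  · intro hcond
    rw [hXQbij]
    have hQinj : Function.Injective Q := by
      by_contra hni
      obtain ⟨x, hx0, hx⟩ := (not_injective_iff_exists Q).mp hni
      set K : Submodule ℝ V := LinearMap.ker Q with hK
      have hxK : x ∈ K := LinearMap.mem_ker.mpr hx
      have hKinv : ∀ y ∈ K, P y ∈ K := fun y hy =>
        LinearMap.mem_ker.mpr (hKP y (LinearMap.mem_ker.mp hy))
      set e : K →ₗ[ℝ] K := (P : V →ₗ[ℝ] V).restrict hKinv with he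
      have hcomm : (K.subtype) ∘ₗ e = (P : V →ₗ[ℝ] V) ∘ₗ K.subtype := by
        ext y; simp [he, LinearMap.restrict_coe_apply]
      have hnt : Nontrivial K :=
        ⟨⟨⟨x, hxK⟩, 0, fun h => hx0 (by simpa using congrArg Subtype.val h)⟩⟩
      have hnt2 : Nontrivial (ℂ ⊗[ℝ] K) := by
        refine ⟨⟨(1 : ℂ) ⊗ₜ[ℝ] (⟨x, hxK⟩ : K), 0, fun h => ?_⟩⟩
        have h10 := (one_tmul_eq_zero_iff (⟨x, hxK⟩ : K)).mp h
        exact hx0 (by simpa using congrArg Subtype.val h10)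
      obtain ⟨μ, hμe⟩ :=
        Module.End.exists_eigenvalue (LinearMap.baseChange ℂ e : Module.End ℂ (ℂ ⊗[ℝ] K))
      obtain ⟨w, hw⟩ := hμe.exists_hasEigenvector
      set u := LinearMap.baseChange ℂ (K.subtype) w with hu
      have hu0 : u ≠ 0 := by
        intro h
        apply hw.2
        apply baseChange_inj (K.injective_subtype)
        simpa [hu] using h
      have hPu : LinearMap.baseChange ℂ (P : V →ₗ[ℝ] V) u = μ • u := by
        have h1 : LinearMap.baseChange ℂ (K.subtype ∘ₗ e) w
            = LinearMap.baseChange ℂ ((P : V →ₗ[ℝ] V) ∘ₗ K.subtype) w := by rw [hcomm]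
        rw [LinearMap.baseChange_comp, LinearMap.baseChange_comp] at h1
        have h2 : LinearMap.baseChange ℂ e w = μ • w := Module.End.mem_eigenspace_iff.mp hw.1
        simp only [LinearMap.comp_apply] at h1
        rw [hu, ← h1, h2, _root_.map_smul]
      have hμP : Module.End.HasEigenvalue (LinearMap.baseChange ℂ (P : V →ₗ[ℝ] V)) μ :=
        Module.End.hasEigenvalue_of_hasEigenvector
          ⟨Module.End.mem_eigenspace_iff.mpr hPu, hu0⟩
      have huY : u ∈ Submodule.baseChange ℂ Y := by
        have hall : ∀ t : ℂ ⊗[ℝ] K,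
            LinearMap.baseChange ℂ (K.subtype) t ∈ Submodule.baseChange ℂ Y := by
          intro t
          induction t using TensorProduct.induction_on with
          | zero => simp
          | tmul a k =>
            rw [LinearMap.baseChange_tmul]
            exact Submodule.tmul_mem_baseChange_of_mem a (hKY k (LinearMap.mem_ker.mp k.2))
          | add s t hs ht => rw [map_add]; exact Submodule.add_mem _ hs ht
        exact hall w
      have hbot : u ∈ (⊥ : Submodule ℂ (ℂ ⊗[ℝ] V)) := by
        rw [← hcond μ hμP]
        exact Submodule.mem_inf.mpr ⟨Module.End.mem_eigenspace_iff.mpr hPu, huY⟩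
      exact hu0 (Submodule.mem_bot _ |>.mp hbot)
    exact ⟨hQinj, (LinearMap.injective_iff_surjective).mp hQinj⟩
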